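/- Let p ≥ 5 be a prime, t ≥ 2, a = (2^(t+1)-3)^2, b = 3·2^(t+2), with p^2 ≡ 1 (mod b). Let i₀ be the least nonnegative residue mod p with b·i₀ ≡ -a (mod p), and let C = a(p^2-1)/b - p·⌊ap/b⌋. Then the base-p digit in position 1 of the p-adic expansion of the p-adic number -a/b ∈ ℤ_p equals (⌊ap/b⌋ + ⌊C/p⌋) mod p, and its digit in position 0 is i₀. -/

import Mathlib

/-- If `m` is congruent to `x` mod `p^n`, then `x.appr n = m % p^n`. -/
lemma appr_eq_of_dvd {p : ℕ} [Fact p.Prime] (x : ℤ_[p]) (n m : ℕ)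
    (h : (p : ℤ_[p]) ^ n ∣ x - m) : x.appr n = m % p ^ n := by
  haveI : NeZero (p ^ n) := ⟨pow_ne_zero n (Fact.out : p.Prime).ne_zero⟩
  have h1 : x - (x.appr n : ℤ_[p]) ∈ Ideal.span {(p : ℤ_[p]) ^ n} := PadicInt.appr_spec n x
  have h2 : x - (m : ℤ_[p]) ∈ Ideal.span {(p : ℤ_[p]) ^ n} := Ideal.mem_span_singleton.mpr h
  have h3 : ((x.appr n : ZMod (p ^ n))) = (m : ZMod (p ^ n)) :=
    PadicInt.zmod_congr_of_sub_mem_span n x _ _ h1 h2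
  have := congrArg ZMod.val h3
  rwa [ZMod.val_natCast, ZMod.val_natCast, Nat.mod_eq_of_lt (PadicInt.appr_lt x n)] at this

/-- Equation (5.25): with `a = (2^(t+1)-3)²`, `b = 3·2^(t+2)`, `p ≥ 5` prime with
`p² ≡ 1 (mod b)`, `i₀` the least nonnegative residue with `b·i₀ ≡ -a (mod p)`,
and `C = a(p²-1)/b - p⌊ap/b⌋`, the `p`-adic number `x = -a/b ∈ ℤ_p` has
`0`-th digit `i₀` and `1`-st digit `(⌊ap/b⌋ + ⌊C/p⌋) mod p`.  Digits are read
off from the approximations `x.appr n` (the residue of `x` mod `pⁿ`). -/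
theorem stmt_17 (p t : ℕ) [Fact p.Prime] (hp5 : 5 ≤ p) (ht : 2 ≤ t)
    (a b : ℕ) (ha : a = (2 ^ (t + 1) - 3) ^ 2) (hb : b = 3 * 2 ^ (t + 2))
    (hdvd : (b : ℤ) ∣ (p : ℤ) ^ 2 - 1)
    (i₀ : ℕ) (hi₀lt : i₀ < p) (hi₀ : (b : ℤ) * i₀ ≡ -(a : ℤ) [ZMOD (p : ℤ)])
    (C : ℤ) (hC : C = (a : ℤ) * ((p : ℤ) ^ 2 - 1) / b - p * ((a * p : ℤ) / b))
    (x : ℤ_[p]) (hx : (b : ℤ_[p]) * x = -(a : ℤ_[p])) :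
    x.appr 1 = i₀ ∧
      (x.appr 2 / p) % p = ((((a * p : ℤ) / b + Int.fdiv C p) % p)).toNat := by
  have hp : p.Prime := Fact.out
  have hp0 : 0 < p := hp.pos
  have hb0 : 0 < b := by rw [hb]; positivity
  -- p does not divide b
  have hpb : ¬ p ∣ b := by
    intro hdvd'
    rw [hb] at hdvd'
    rcases (Nat.Prime.dvd_mul hp).mp hdvd' with h3 | h2
    · have := Nat.le_of_dvd (by norm_num) h3
      omega
    · have := Nat.le_of_dvd (by norm_num) (hp.dvd_of_dvd_pow h2)
      omega
  have hcop : Nat.Coprime b p := (hp.coprime_iff_not_dvd.mpr hpb).symm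
  -- b divides p^2 - 1 in ℕ
  have hp2 : 1 ≤ p ^ 2 := Nat.one_le_pow _ _ hp0
  have hcast : ((p ^ 2 - 1 : ℕ) : ℤ) = (p : ℤ) ^ 2 - 1 := by
    push_cast [Nat.cast_sub hp2]; ring
  have hbd : b ∣ p ^ 2 - 1 := by
    have : (b : ℤ) ∣ ((p ^ 2 - 1 : ℕ) : ℤ) := by rw [hcast]; exact hdvd
    exact_mod_cast this
  set M : ℕ := a * (p ^ 2 - 1) / b with hM
  have hbM : b * M = a * (p ^ 2 - 1) := Nat.mul_div_cancel' (hbd.mul_left a)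
  -- (b : ℤ_[p]) is a unit
  have hbu : IsUnit (b : ℤ_[p]) := by
    rw [PadicInt.isUnit_iff]
    have h1 : ((b : ℤ) : ℤ_[p]) = (b : ℤ_[p]) := by push_cast; ring
    have hle : ‖(b : ℤ_[p])‖ ≤ 1 := PadicInt.norm_le_one _
    have hlt : ¬ ‖(b : ℤ_[p])‖ < 1 := by
      rw [← h1, PadicInt.norm_int_lt_one_iff_dvd]
      exact_mod_cast hpb
    linarith [lt_or_eq_of_le hle |>.resolve_left hlt]
  -- key congruence: p^2 ∣ x - M
  have key : ∀ n : ℕ, n ≤ 2 → (p : ℤ_[p]) ^ n ∣ x - (M : ℤ_[p]) := by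
    intro n hn
    have h1 : (b : ℤ_[p]) * (x - (M : ℤ_[p])) = -(a : ℤ_[p]) * (p : ℤ_[p]) ^ 2 := by
      have hbMc : (b : ℤ_[p]) * (M : ℤ_[p]) = (a : ℤ_[p]) * ((p : ℤ_[p]) ^ 2 - 1) := by
        have := congrArg (fun k : ℕ => (k : ℤ_[p])) hbM
        push_cast at this
        rw [this]
        have : ((p ^ 2 - 1 : ℕ) : ℤ_[p]) = (p : ℤ_[p]) ^ 2 - 1 := by
          have : ((p ^ 2 - 1 : ℕ) : ℤ_[p]) = (((p ^ 2 - 1 : ℕ) : ℤ) : ℤ_[p]) := by push_cast; ring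
          rw [this, hcast]; push_cast; ring
        rw [this]
      rw [mul_sub, hx, hbMc]; ring
    have h2 : (p : ℤ_[p]) ^ n ∣ (b : ℤ_[p]) * (x - (M : ℤ_[p])) := by
      rw [h1]
      exact Dvd.dvd.mul_left (pow_dvd_pow _ hn) _
    exact (hbu.dvd_mul_left).mp h2
  have happr2 : x.appr 2 = M % p ^ 2 := appr_eq_of_dvd x 2 M (key 2 le_rfl)
  have happr1 : x.appr 1 = M % p := by
    have := appr_eq_of_dvd x 1 M (key 1 (by norm_num))
    simpa using this
  -- M ≡ i₀ mod p
  have hMi : M % p = i₀ := by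
    have hM1 : (b : ℤ) * M ≡ -(a : ℤ) [ZMOD (p : ℤ)] := by
      have : (b : ℤ) * M = (a : ℤ) * (p : ℤ) ^ 2 - a := by
        have := congrArg (fun k : ℕ => (k : ℤ)) hbM
        push_cast at this
        rw [this, hcast]; ring
      rw [this]
      exact Int.modEq_iff_dvd.mpr ⟨-((a : ℤ) * p), by ring⟩
    have hcc : (b : ℤ) * (M : ℤ) ≡ (b : ℤ) * (i₀ : ℤ) [ZMOD (p : ℤ)] := hM1.trans hi₀.symm
    have hgcd : Int.gcd (p : ℤ) (b : ℤ) = 1 := by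
      rw [Int.gcd_natCast_natCast]
      exact hcop.symm
    have := Int.ModEq.cancel_left_div_gcd (by exact_mod_cast hp0) hcc
    rw [hgcd] at this
    simp only [Nat.cast_one, Int.ediv_one] at this
    have h2 : (M : ℤ) % p = (i₀ : ℤ) % p := this
    have h3 : ((M % p : ℕ) : ℤ) = ((i₀ % p : ℕ) : ℤ) := by
      push_cast; exact h2
    have h4 : M % p = i₀ % p := by exact_mod_cast h3
    rw [h4, Nat.mod_eq_of_lt hi₀lt]
  refine ⟨by rw [happr1, hMi], ?_⟩
  -- second digit
  have hlhs : x.appr 2 / p % p = M / p % p := by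
    rw [happr2, pow_two, Nat.mod_mul_right_div_self]
    exact Nat.mod_mod_of_dvd _ dvd_rfl
  -- C = M - p * q with q = (a*p)/b
  have hq : ((a * p : ℤ)) / b = ((a * p / b : ℕ) : ℤ) := by
    push_cast [Int.natCast_ediv]; ring_nf
  have hMdiv : ((a : ℤ) * ((p : ℤ) ^ 2 - 1)) / b = (M : ℤ) := by
    rw [← hcast, hM]
    push_cast [Int.natCast_ediv]
    ring_nf
  have hCM : C = (M : ℤ) - (p : ℤ) * ((a * p / b : ℕ) : ℤ) := by
    rw [hC, hMdiv, hq]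
  have hfd : Int.fdiv C p = C / p := Int.fdiv_eq_ediv_of_nonneg C (by positivity)
  have hrhs : (a * p : ℤ) / b + Int.fdiv C p = ((M / p : ℕ) : ℤ) := by
    rw [hq, hfd]
    have hpne : (p : ℤ) ≠ 0 := by exact_mod_cast hp0.ne'
    have hM'' : (M : ℤ) = C + ((a * p / b : ℕ) : ℤ) * (p : ℤ) := by rw [hCM]; ring
    calc ((a * p / b : ℕ) : ℤ) + C / (p : ℤ)
        = C / (p : ℤ) + ((a * p / b : ℕ) : ℤ) := add_comm _ _
      _ = (C + ((a * p / b : ℕ) : ℤ) * (p : ℤ)) / p := (Int.add_mul_ediv_right _ _ hpne).symm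
      _ = (M : ℤ) / p := by rw [hM'']
      _ = ((M / p : ℕ) : ℤ) := (Int.natCast_ediv M p).symm
  rw [hlhs, hrhs]
  have : (((M / p : ℕ) : ℤ)) % (p : ℤ) = ((M / p % p : ℕ) : ℤ) := by push_cast; ring
  rw [this, Int.toNat_natCast]
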